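/- Let π and π' be valid functions with π' ≤ π pointwise. Then P(π) ⊆ P(π'). If moreover π' is minimal valid and π(x₀) > π'(x₀) for some x₀ ∈ ℝ, then P(π) ≠ P(π') (so the inclusion is strict). -/

import Mathlib

/-- A finite-support function `y : ℝ → ℕ` is feasible if `∑ r, r·y(r) − f ∈ ℤ`. -/
def Feasible (f : ℝ) (y : ℝ →₀ ℕ) : Prop :=
  ∃ z : ℤ, (∑ r ∈ y.support, r * (y r : ℝ)) - f = (z : ℝ)

/-- `π` is a valid function: nonnegative, and `∑ r, π(r)·y(r) ≥ 1` for every feasible `y`. -/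
def Valid (f : ℝ) (π : ℝ → ℝ) : Prop :=
  (∀ x, 0 ≤ π x) ∧
    ∀ y : ℝ →₀ ℕ, Feasible f y → 1 ≤ ∑ r ∈ y.support, π r * (y r : ℝ)

/-- A valid function is minimal if no other valid function is pointwise ≤ it. -/
def MinimalValid (f : ℝ) (π : ℝ → ℝ) : Prop :=
  Valid f π ∧ ¬ ∃ π' : ℝ → ℝ, Valid f π' ∧ (∀ x, π' x ≤ π x) ∧ π' ≠ π

/-- `P(π)`: the set of feasible `y` with `∑ r, π(r)·y(r) = 1`. -/
def Pset (f : ℝ) (π : ℝ → ℝ) : Set (ℝ →₀ ℕ) :=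
  {y | Feasible f y ∧ ∑ r ∈ y.support, π r * (y r : ℝ) = 1}

/-- `E(π) = {(x,y) : π(x) + π(y) = π(x+y)}`. -/
def Eset (π : ℝ → ℝ) : Set (ℝ × ℝ) :=
  {p | π p.1 + π p.2 = π (p.1 + p.2)}

/-- A valid function `π` is a facet if every valid `π'` with `P(π) ⊆ P(π')` equals `π`. -/
def IsFacet (f : ℝ) (π : ℝ → ℝ) : Prop :=
  Valid f π ∧ ∀ π' : ℝ → ℝ, Valid f π' → Pset f π ⊆ Pset f π' → π' = π

/-- A valid function `π` is a weak facet if every valid `π'` with `P(π) ⊆ P(π')`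
has `P(π) = P(π')`. -/
def IsWeakFacet (f : ℝ) (π : ℝ → ℝ) : Prop :=
  Valid f π ∧ ∀ π' : ℝ → ℝ, Valid f π' → Pset f π ⊆ Pset f π' → Pset f π = Pset f π'

/-- A valid function `π` is extreme if whenever `π = (π¹ + π²)/2` with `π¹, π²` valid,
then `π¹ = π² = π`. -/
def ExtremeFunc (f : ℝ) (π : ℝ → ℝ) : Prop :=
  Valid f π ∧ ∀ π₁ π₂ : ℝ → ℝ, Valid f π₁ → Valid f π₂ →
    (∀ x, π x = (π₁ x + π₂ x) / 2) → π₁ = π ∧ π₂ = π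

/-- `π` is piecewise linear: there is a closed, discrete set `B ⊆ ℝ` of breakpoints
such that `π` is affine on each connected component of `ℝ \ B`. -/
def PiecewiseLinear (π : ℝ → ℝ) : Prop :=
  ∃ B : Set ℝ, IsClosed B ∧
    (∀ x ∈ B, ∃ ε > (0 : ℝ), ∀ y ∈ B, |y - x| < ε → y = x) ∧
    (∀ x ∉ B, ∃ a b : ℝ, ∀ z ∈ connectedComponentIn Bᶜ x, π z = a * z + b)

/-- `π` is continuous piecewise linear. -/
def ContPiecewiseLinear (π : ℝ → ℝ) : Prop :=
  PiecewiseLinear π ∧ Continuous π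

namespace Stmt13Aux

noncomputable def S (π : ℝ → ℝ) (y : ℝ →₀ ℕ) : ℝ := ∑ r ∈ y.support, π r * (y r : ℝ)

noncomputable def W (y : ℝ →₀ ℕ) : ℝ := ∑ r ∈ y.support, r * (y r : ℝ)

lemma S_eq (π : ℝ → ℝ) (y : ℝ →₀ ℕ) : S π y = y.sum fun r n => π r * (n : ℝ) := rfl

lemma W_eq (y : ℝ →₀ ℕ) : W y = y.sum fun r n => r * (n : ℝ) := rfl

lemma S_add (π : ℝ → ℝ) (y₁ y₂ : ℝ →₀ ℕ) : S π (y₁ + y₂) = S π y₁ + S π y₂ := by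
  simp only [S_eq]
  exact Finsupp.sum_add_index' (fun a => by simp) (fun a b₁ b₂ => by push_cast; ring)

lemma W_add (y₁ y₂ : ℝ →₀ ℕ) : W (y₁ + y₂) = W y₁ + W y₂ := by
  simp only [W_eq]
  exact Finsupp.sum_add_index' (fun a => by simp) (fun a b₁ b₂ => by push_cast; ring)

lemma S_single (π : ℝ → ℝ) (a : ℝ) (n : ℕ) : S π (Finsupp.single a n) = π a * n := by
  simp only [S_eq]
  exact Finsupp.sum_single_index (by simp)

lemma W_single (a : ℝ) (n : ℕ) : W (Finsupp.single a n) = a * n := by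
  simp only [W_eq]
  exact Finsupp.sum_single_index (by simp)

lemma S_mono {π₁ π₂ : ℝ → ℝ} (h : ∀ x, π₁ x ≤ π₂ x) (y : ℝ →₀ ℕ) : S π₁ y ≤ S π₂ y :=
  Finset.sum_le_sum fun r _ => mul_le_mul_of_nonneg_right (h r) (by positivity)

lemma S_nonneg {π : ℝ → ℝ} (h : ∀ x, 0 ≤ π x) (y : ℝ →₀ ℕ) : 0 ≤ S π y :=
  Finset.sum_nonneg fun r _ => mul_nonneg (h r) (by positivity)

lemma erase_decomp (y : ℝ →₀ ℕ) (s : ℝ) : y = y.erase s + Finsupp.single s (y s) := by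
  rw [add_comm]
  exact (Finsupp.single_add_erase s y).symm

lemma S_erase (π : ℝ → ℝ) (y : ℝ →₀ ℕ) (s : ℝ) :
    S π y = S π (y.erase s) + π s * (y s : ℝ) := by
  conv_lhs => rw [erase_decomp y s]
  rw [S_add, S_single]

lemma W_erase (y : ℝ →₀ ℕ) (s : ℝ) :
    W y = W (y.erase s) + s * (y s : ℝ) := by
  conv_lhs => rw [erase_decomp y s]
  rw [W_add, W_single]

lemma S_congr {π₁ π₂ : ℝ → ℝ} (y : ℝ →₀ ℕ) (h : ∀ r ∈ y.support, π₁ r = π₂ r) :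
    S π₁ y = S π₂ y :=
  Finset.sum_congr rfl fun r hr => by rw [h r hr]

lemma S_update (π : ℝ → ℝ) (s v : ℝ) (y : ℝ →₀ ℕ) :
    S (Function.update π s v) y = S π y + (v - π s) * (y s : ℝ) := by
  have h1 : S (Function.update π s v) (y.erase s) = S π (y.erase s) := by
    apply S_congr
    intro r hr
    rw [Finsupp.support_erase, Finset.mem_erase] at hr
    rw [Function.update_of_ne hr.1]
  rw [S_erase (Function.update π s v) y s, S_erase π y s, h1, Function.update_self]
  ring

lemma min_force {f : ℝ} {π π₂ : ℝ → ℝ} (h : MinimalValid f π) (h2 : Valid f π₂)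
    (hle : ∀ x, π₂ x ≤ π x) : ∀ x, π₂ x = π x := by
  have : π₂ = π := by
    by_contra hne
    exact h.2 ⟨π₂, h2, hle, hne⟩
  exact fun x => congrFun this x


lemma Valid_iff (f : ℝ) (π : ℝ → ℝ) :
    Valid f π ↔ (∀ x, 0 ≤ π x) ∧ ∀ y : ℝ →₀ ℕ, Feasible f y → 1 ≤ S π y := Iff.rfl

lemma Feasible_iff (f : ℝ) (y : ℝ →₀ ℕ) : Feasible f y ↔ ∃ z : ℤ, W y - f = (z : ℝ) := Iff.rfl

lemma le_one {f : ℝ} {π : ℝ → ℝ} (h : MinimalValid f π) : ∀ x, π x ≤ 1 := by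
  set π₂ : ℝ → ℝ := fun x => min (π x) 1 with hπ₂
  have hval : Valid f π₂ := by
    constructor
    · intro x
      exact le_min (h.1.1 x) zero_le_one
    · intro y hy
      by_cases hc : ∃ r ∈ y.support, 1 ≤ π r
      · obtain ⟨r, hr, hr1⟩ := hc
        have h1 : (1:ℝ) ≤ π₂ r * (y r : ℝ) := by
          have h2 : π₂ r = 1 := min_eq_right hr1
          rw [h2, one_mul]
          exact_mod_cast Nat.one_le_iff_ne_zero.mpr (Finsupp.mem_support_iff.mp hr)
        calc (1:ℝ) ≤ π₂ r * (y r : ℝ) := h1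
          _ ≤ S π₂ y := Finset.single_le_sum (f := fun i => π₂ i * (y i : ℝ))
              (fun i _ => mul_nonneg (le_min (h.1.1 i) zero_le_one) (by positivity)) hr
      · push_neg at hc
        have heq : S π₂ y = S π y := S_congr y fun r hr => min_eq_left (hc r hr).le
        show (1:ℝ) ≤ S π₂ y
        rw [heq]
        exact h.1.2 y hy
  intro x
  have := min_force h hval (fun x => min_le_left _ _) x
  exact min_eq_left_iff.mp this

open Classical in
lemma int_sum (g : ℝ →₀ ℕ) : ∀ s : Finset ℝ, (∀ r ∈ s, ∃ m : ℤ, (m:ℝ) = r) →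
    ∃ M : ℤ, (M : ℝ) = ∑ r ∈ s, r * (g r : ℝ) := by
  intro s
  induction s using Finset.cons_induction with
  | empty => exact fun _ => ⟨0, by simp⟩
  | cons a s ha ih =>
    intro hs
    obtain ⟨m, hm⟩ := hs a (Finset.mem_cons_self a s)
    obtain ⟨M, hM⟩ := ih (fun r hr => hs r (Finset.mem_cons.mpr (Or.inr hr)))
    refine ⟨m * (g a : ℤ) + M, ?_⟩
    rw [Finset.sum_cons, ← hM, ← hm]
    push_cast
    ring

open Classical in
lemma int_zero {f : ℝ} (hf : f ∈ Set.Ioo (0:ℝ) 1) {π : ℝ → ℝ} (h : MinimalValid f π) :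
    ∀ m : ℤ, π (m : ℝ) = 0 := by
  classical
  set p : ℝ → Prop := fun r => ¬ ∃ m : ℤ, (m : ℝ) = r with hp
  set π₂ : ℝ → ℝ := fun x => if p x then π x else 0 with hπ₂
  have hπ₂app : ∀ x, π₂ x = if p x then π x else 0 := fun x => rfl
  have hle : ∀ x, π₂ x ≤ π x := by
    intro x
    rw [hπ₂app]
    by_cases hx : p x
    · rw [if_pos hx]
    · rw [if_neg hx]; exact h.1.1 x
  have hnn : ∀ x, 0 ≤ π₂ x := by
    intro x
    rw [hπ₂app]
    by_cases hx : p x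
    · rw [if_pos hx]; exact h.1.1 x
    · rw [if_neg hx]
  have keyS : ∀ y : ℝ →₀ ℕ, S π₂ y = S π (y.filter p) := by
    intro y
    have h1 : S π₂ y = ∑ r ∈ y.support.filter p, π r * (y r : ℝ) := by
      rw [show S π₂ y = ∑ r ∈ y.support, π₂ r * (y r : ℝ) from rfl]
      rw [Finset.sum_filter]
      apply Finset.sum_congr rfl
      intro r _
      rw [hπ₂app]
      by_cases hr : p r
      · rw [if_pos hr, if_pos hr]
      · rw [if_neg hr, if_neg hr, zero_mul]
    rw [h1]
    rw [show S π (y.filter p) = ∑ r ∈ (y.filter p).support, π r * ((y.filter p) r : ℝ) from rfl]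
    rw [Finsupp.support_filter]
    apply Finset.sum_congr rfl
    intro r hr
    rw [Finsupp.filter_apply_pos p y (Finset.mem_filter.mp hr).2]
  have keyW : ∀ y : ℝ →₀ ℕ, ∃ M : ℤ, W y - W (y.filter p) = (M : ℝ) := by
    intro y
    have hsplit : W y = (∑ r ∈ y.support.filter p, r * (y r : ℝ))
        + ∑ r ∈ y.support.filter (fun r => ¬ p r), r * (y r : ℝ) :=
      (Finset.sum_filter_add_sum_filter_not _ _ _).symm
    have hW' : W (y.filter p) = ∑ r ∈ y.support.filter p, r * (y r : ℝ) := by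
      rw [show W (y.filter p) = ∑ r ∈ (y.filter p).support, r * ((y.filter p) r : ℝ) from rfl]
      rw [Finsupp.support_filter]
      apply Finset.sum_congr rfl
      intro r hr
      rw [Finsupp.filter_apply_pos p y (Finset.mem_filter.mp hr).2]
    have hmem : ∀ r ∈ y.support.filter (fun r => ¬ p r), ∃ m : ℤ, (m : ℝ) = r := by
      intro r hr
      have h2 := (Finset.mem_filter.mp hr).2
      rw [hp] at h2
      exact not_not.mp h2
    obtain ⟨M, hM⟩ := int_sum y _ hmem
    exact ⟨M, by rw [hsplit, hW', ← hM]; ring⟩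
  have hval : Valid f π₂ := by
    refine ⟨hnn, ?_⟩
    intro y hy
    obtain ⟨z, hz⟩ := (Feasible_iff f y).mp hy
    obtain ⟨M, hM⟩ := keyW y
    have hfeas : Feasible f (y.filter p) := by
      rw [Feasible_iff]
      exact ⟨z - M, by push_cast; linarith⟩
    have h2 := h.1.2 (y.filter p) hfeas
    show (1:ℝ) ≤ S π₂ y
    rw [keyS y]
    exact h2
  intro m
  have heq := min_force h hval hle (m : ℝ)
  rw [hπ₂app] at heq
  have hpm : ¬ p (m : ℝ) := by rw [hp]; push_neg; exact ⟨m, rfl⟩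
  rw [if_neg hpm] at heq
  exact heq.symm


lemma subadd {f : ℝ} {π : ℝ → ℝ} (h : MinimalValid f π) :
    ∀ a b : ℝ, π (a + b) ≤ π a + π b := by
  intro a b
  set s : ℝ := a + b with hs
  set π₂ : ℝ → ℝ := Function.update π s (min (π s) (π a + π b)) with hπ₂
  have hle : ∀ x, π₂ x ≤ π x := by
    intro x
    rw [hπ₂]
    by_cases hx : x = s
    · subst hx; rw [Function.update_self]; exact min_le_left _ _
    · rw [Function.update_of_ne hx]
  have hval : Valid f π₂ := by
    constructor
    · intro x
      rw [hπ₂]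
      by_cases hx : x = s
      · subst hx; rw [Function.update_self]
        exact le_min (h.1.1 _) (add_nonneg (h.1.1 a) (h.1.1 b))
      · rw [Function.update_of_ne hx]; exact h.1.1 x
    · intro y hy
      show (1:ℝ) ≤ S π₂ y
      rw [hπ₂, S_update]
      rcases min_cases (π s) (π a + π b) with ⟨hmin, _⟩ | ⟨hmin, hlt⟩
      · rw [hmin]
        simp only [sub_self, zero_mul, add_zero]
        exact h.1.2 y hy
      · rw [hmin]
        set k : ℕ := y s with hk
        set y' : ℝ →₀ ℕ := y.erase s + Finsupp.single a k + Finsupp.single b k with hy'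
        have hWy' : W y' = W y := by
          rw [hy', W_add, W_add, W_single, W_single, W_erase y s]
          rw [hs]
          push_cast
          ring
        have hfeas' : Feasible f y' := by
          obtain ⟨z, hz⟩ := hy
          refine ⟨z, ?_⟩
          show W y' - f = (z:ℝ)
          rw [hWy']
          exact hz
        have hSy' := h.1.2 y' hfeas'
        have hSy'eq : S π y' = S π (y.erase s) + π a * k + π b * k := by
          rw [hy', S_add, S_add, S_single, S_single]
        have hSy : S π y = S π (y.erase s) + π s * k := S_erase π y s
        have : (1:ℝ) ≤ S π y' := hSy'
        rw [hSy'eq] at this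
        rw [hSy]
        ring_nf
        ring_nf at this
        linarith
  have := min_force h hval hle s
  rw [hπ₂, Function.update_self] at this
  have h2 := min_eq_left_iff.mp (this)
  exact h2

lemma nsmul_bound {π : ℝ → ℝ} (hsub : ∀ a b : ℝ, π (a + b) ≤ π a + π b)
    (h0 : π 0 = 0) : ∀ (n : ℕ) (a : ℝ), π ((n : ℝ) * a) ≤ (n : ℝ) * π a := by
  intro n a
  induction n with
  | zero => simp [h0]
  | succ n ih =>
    have : ((n:ℝ) + 1) * a = (n:ℝ) * a + a := by ring
    push_cast
    rw [this]
    calc π ((n:ℝ) * a + a) ≤ π ((n:ℝ) * a) + π a := hsub _ _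
      _ ≤ (n:ℝ) * π a + π a := by linarith
      _ = ((n:ℝ) + 1) * π a := by ring

lemma W_subadd {π : ℝ → ℝ} (hsub : ∀ a b : ℝ, π (a + b) ≤ π a + π b)
    (h0 : π 0 = 0) (y : ℝ →₀ ℕ) : π (W y) ≤ S π y := by
  induction y using Finsupp.induction with
  | zero => 
    rw [show W 0 = 0 from by simp [W_eq], show S π 0 = 0 from by simp [S_eq]]
    rw [h0]
  | single_add a n y hay hn ih =>
    rw [W_add, S_add, W_single, S_single]
    calc π (a * n + W y) ≤ π (a * n) + π (W y) := hsub _ _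
      _ ≤ π a * n + S π y := by
          have h2 := nsmul_bound hsub h0 n a
          rw [mul_comm ((n:ℝ)) a] at h2
          linarith


lemma pair_feasible (f x : ℝ) : Feasible f (Finsupp.single x 1 + Finsupp.single (f - x) 1) := by
  refine ⟨0, ?_⟩
  show W _ - f = ((0:ℤ):ℝ)
  rw [W_add, W_single, W_single]
  push_cast
  ring

lemma S_pair (π : ℝ → ℝ) (f x : ℝ) :
    S π (Finsupp.single x 1 + Finsupp.single (f - x) 1) = π x + π (f - x) := by
  rw [S_add, S_single, S_single]
  push_cast
  ring

lemma sym_ge {f : ℝ} {π : ℝ → ℝ} (h : Valid f π) (x : ℝ) : 1 ≤ π x + π (f - x) := by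
  have h2 : (1:ℝ) ≤ S π (Finsupp.single x 1 + Finsupp.single (f - x) 1) :=
    h.2 _ (pair_feasible f x)
  rw [S_pair] at h2
  exact h2

set_option maxHeartbeats 1000000 in
lemma sym_eq {f : ℝ} (hf : f ∈ Set.Ioo (0:ℝ) 1) {π : ℝ → ℝ} (h : MinimalValid f π) (x : ℝ) :
    π x + π (f - x) = 1 := by
  have hge := sym_ge h.1 x
  by_contra hne
  set u : ℝ := f - x with hu
  set δ : ℝ := π x + π u - 1 with hδ
  have hδpos : 0 < δ := by
    rcases lt_or_gt_of_ne hne with h1 | h1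
    · exfalso; linarith
    · rw [hδ]; linarith
  have hx1 : π x ≤ 1 := le_one h x
  have hu1 : π u ≤ 1 := le_one h u
  have hδ1 : δ ≤ 1 := by rw [hδ]; linarith
  have huδ : δ ≤ π u := by rw [hδ]; linarith
  have h0 : π 0 = 0 := by
    have := int_zero hf h 0
    simpa using this
  have hz : ∀ m : ℤ, π (m:ℝ) = 0 := int_zero hf h
  have hsub := subadd h
  set c : ℝ := δ^2 / 2 with hc
  have hcpos : 0 < c := by positivity
  have hcδ : c ≤ δ := by nlinarith
  set π₂ : ℝ → ℝ := Function.update π u (π u - c) with hπ₂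
  have hle : ∀ w, π₂ w ≤ π w := by
    intro w
    rw [hπ₂]
    by_cases hw : w = u
    · subst hw; rw [Function.update_self]; linarith
    · rw [Function.update_of_ne hw]
  have hval : Valid f π₂ := by
    constructor
    · intro w
      rw [hπ₂]
      by_cases hw : w = u
      · subst hw; rw [Function.update_self]; linarith
      · rw [Function.update_of_ne hw]; exact h.1.1 w
    · intro y hy
      show (1:ℝ) ≤ S π₂ y
      rw [hπ₂, S_update]
      obtain ⟨z, hzfeas⟩ := hy
      have hzW : W y - f = (z:ℝ) := hzfeas
      set k : ℕ := y u with hk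
      rcases Nat.eq_zero_or_pos k with hk0 | hkpos
      · rw [hk0]
        simp only [Nat.cast_zero, mul_zero, add_zero]
        exact h.1.2 y ⟨z, hzfeas⟩
      · set K : ℝ := (k : ℝ) with hK
        have hK1 : 1 ≤ K := by rw [hK]; exact_mod_cast hkpos
        set A : ℝ := S π (y.erase u) with hA
        have hSy : S π y = A + π u * K := S_erase π y u
        have hT : W (y.erase u) = W y - u * K := by
          have := W_erase y u
          linarith
        have hA0 : 0 ≤ A := S_nonneg h.1.1 _
        have hAT : π (W (y.erase u)) ≤ A := W_subadd hsub h0 _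
        -- π x ≤ π (W (y.erase u)) + (K - 1) * π u
        obtain ⟨k', hk'⟩ : ∃ k' : ℕ, k = k' + 1 := ⟨k - 1, (Nat.succ_pred_eq_of_pos hkpos).symm⟩
        have hK' : K = (k' : ℝ) + 1 := by rw [hK, hk']; push_cast; ring
        have hchain : π x ≤ π (W (y.erase u)) + (K - 1) * π u := by
          have e1 : x = W (y.erase u) + ((k' : ℝ) * u + ((-z : ℤ) : ℝ)) := by
            rw [hT]
            push_cast
            rw [hu] at *
            rw [hK'] at *
            linarith [hzW]
          have e2 : π ((k':ℝ) * u + ((-z : ℤ):ℝ)) ≤ (k':ℝ) * π u := by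
            calc π ((k':ℝ) * u + ((-z : ℤ):ℝ)) ≤ π ((k':ℝ) * u) + π ((-z : ℤ):ℝ) := hsub _ _
              _ = π ((k':ℝ) * u) := by rw [hz (-z)]; ring
              _ ≤ (k':ℝ) * π u := nsmul_bound hsub h0 k' u
          calc π x = π (W (y.erase u) + ((k':ℝ) * u + ((-z : ℤ):ℝ))) := by rw [← e1]
            _ ≤ π (W (y.erase u)) + π ((k':ℝ) * u + ((-z : ℤ):ℝ)) := hsub _ _
            _ ≤ π (W (y.erase u)) + (K - 1) * π u := by
                rw [hK']
                simp only [add_sub_cancel_right]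
                linarith [e2]
        have hbound1 : π x - (K - 1) * π u ≤ A := by linarith
        have hxu : π x + π u = 1 + δ := by rw [hδ]; ring
        -- goal : 1 ≤ S π y + (π u - c - π u) * K
        rw [hSy]
        have hgoal : 1 + c * K ≤ A + π u * K → 1 ≤ A + π u * K + (π u - c - π u) * (y u : ℝ) := by
          intro hh
          have : ((y u : ℕ) : ℝ) = K := by rw [hK, hk]
          rw [this]
          ring_nf
          ring_nf at hh
          linarith
        apply hgoal
        by_cases hcase : K * δ ≤ 2
        · -- A + π u * K ≥ π x + π u = 1 + δ ≥ 1 + c * K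
          have h1 : π x + π u ≤ A + π u * K := by nlinarith [hbound1, h.1.1 u]
          have h2 : c * K ≤ δ := by rw [hc]; nlinarith
          linarith
        · push_neg at hcase
          have h1 : δ * K ≤ A + π u * K := by nlinarith [huδ, hA0]
          have h2 : 1 + c * K ≤ δ * K := by rw [hc]; nlinarith
          linarith
  have := min_force h hval hle u
  rw [hπ₂, Function.update_self] at this
  linarith

end Stmt13Aux

theorem stmt13 (f : ℝ) (hf : f ∈ Set.Ioo (0 : ℝ) 1) (π π' : ℝ → ℝ)
    (hπ : Valid f π) (hπ' : Valid f π') (hle : ∀ x, π' x ≤ π x) :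
    Pset f π ⊆ Pset f π' ∧
      (MinimalValid f π' → (∃ x₀ : ℝ, π' x₀ < π x₀) → Pset f π ≠ Pset f π') := by
  constructor
  · intro y hy
    obtain ⟨hfeas, hsum⟩ := hy
    refine ⟨hfeas, le_antisymm ?_ (hπ'.2 y hfeas)⟩
    calc (∑ r ∈ y.support, π' r * (y r : ℝ)) ≤ ∑ r ∈ y.support, π r * (y r : ℝ) :=
          Stmt13Aux.S_mono hle y
      _ = 1 := hsum
  · intro hmin ⟨x₀, hx₀⟩ heq
    set y : ℝ →₀ ℕ := Finsupp.single x₀ 1 + Finsupp.single (f - x₀) 1 with hy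
    have hfeas : Feasible f y := Stmt13Aux.pair_feasible f x₀
    have hsym := Stmt13Aux.sym_eq hf hmin x₀
    have hmem : y ∈ Pset f π' := by
      refine ⟨hfeas, ?_⟩
      rw [show (∑ r ∈ y.support, π' r * (y r : ℝ)) = Stmt13Aux.S π' y from rfl]
      rw [hy, Stmt13Aux.S_pair]
      exact hsym
    rw [← heq] at hmem
    obtain ⟨-, hsum⟩ := hmem
    rw [show (∑ r ∈ y.support, π r * (y r : ℝ)) = Stmt13Aux.S π y from rfl] at hsum
    rw [hy, Stmt13Aux.S_pair] at hsum
    have := hle (f - x₀)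
    linarith
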